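/- Let E be a real inner product space, let σ ∈ (1/2, 1), and let a, b ∈ E. Then (2σ+1)·‖a‖² − (2σ−1)·‖b‖² + (2σ²+σ−1)·‖a−b‖² ≥ (1/σ)·‖a‖². -/

import Mathlib

/-- coercivity of the discrete energy functional
𝒜(a,b) = (2σ+1)‖a‖² − (2σ−1)‖b‖² + (2σ²+σ−1)‖a−b‖² ≥ (1/σ)‖a‖². -/
theorem stmt_13 {E : Type*} [NormedAddCommGroup E] [InnerProductSpace ℝ E]
    (σ : ℝ) (hσ : σ ∈ Set.Ioo (1/2 : ℝ) 1) (a b : E) :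
    (2 * σ + 1) * ‖a‖ ^ 2 - (2 * σ - 1) * ‖b‖ ^ 2
      + (2 * σ ^ 2 + σ - 1) * ‖a - b‖ ^ 2 ≥ (1 / σ) * ‖a‖ ^ 2 := by
  obtain ⟨h1, h2⟩ := hσ
  have hσ0 : 0 < σ := by linarith
  have hexp : ‖a - b‖ ^ 2 = ‖a‖ ^ 2 - 2 * inner ℝ a b + ‖b‖ ^ 2 := by
    rw [@norm_sub_sq_real]
  have hin : inner ℝ a b ≤ ‖a‖ * ‖b‖ := real_inner_le_norm a b
  rw [ge_iff_le, div_mul_eq_mul_div, div_le_iff₀ hσ0]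
  have h3 : (0:ℝ) ≤ 2*σ - 1 := by linarith
  have h4 : (0:ℝ) ≤ (2*σ-1) * (2*σ*(σ+1)) := mul_nonneg h3 (by positivity)
  nlinarith [mul_nonneg h3 (sq_nonneg ((σ+1)*‖a‖ - σ*‖b‖)),
    mul_nonneg h4 (sub_nonneg.mpr hin)]
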